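/- arXiv:1703.05151 — 4 statements merged into one kernel-verified Lean document; each statement's English description precedes it below -/
import Mathlib

section
/- Let q ≥ 2 with conjugate exponent q' = q/(q-1), and let c, L₀ > 0. If the inequality l - (c/q'^(1/q')) · l^(1/q) + L₀/q' ≤ 0 holds for some real l ≥ 0, then c ≥ L₀^(1/q') · q'^(1/q') · q^(1/q). -/
theorem stmt_3 (q q' c L0 l : ℝ) (hq : 2 ≤ q) (hq' : q' = q / (q - 1))
    (hc : 0 < c) (hL0 : 0 < L0) (hl : 0 ≤ l)
    (hineq : l - (c / q' ^ (1 / q')) * l ^ (1 / q) + L0 / q' ≤ 0) :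
    c ≥ L0 ^ (1 / q') * q' ^ (1 / q') * q ^ (1 / q) := by
  have hq1 : (1:ℝ) < q := by linarith
  have hconj : q.HolderConjugate q' := by
    rw [Real.holderConjugate_iff_eq_conjExponent hq1]; exact hq'
  have hq0 : 0 < q := hconj.pos
  have hq'1 : 1 < q' := hconj.symm.lt
  have hq'0 : 0 < q' := hconj.symm.pos
  set A : ℝ := q' ^ (1 / q') with hA
  set B : ℝ := q ^ (1 / q) with hB
  have hApos : 0 < A := Real.rpow_pos_of_pos hq'0 _
  have hBpos : 0 < B := Real.rpow_pos_of_pos hq0 _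
  have hAq' : A ^ q' = q' := by
    rw [hA, ← Real.rpow_mul hq'0.le, one_div_mul_cancel hq'0.ne', Real.rpow_one]
  have hBq' : B ^ q' = q ^ (q' / q) := by
    rw [hB, ← Real.rpow_mul hq0.le]
    congr 1; ring
  have hQpos : 0 < q ^ (q' / q) := Real.rpow_pos_of_pos hq0 _
  -- Young's inequality with a = (q*l)^(1/q), b = c/(A*B)
  have hyoung := Real.young_inequality_of_nonneg
    (Real.rpow_nonneg (by positivity : (0:ℝ) ≤ q * l) (1/q))
    (le_of_lt (by positivity : (0:ℝ) < c / (A * B))) hconj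
  have hqlq : ((q * l) ^ (1/q)) ^ q = q * l := by
    rw [← Real.rpow_mul (by positivity), one_div_mul_cancel hq0.ne', Real.rpow_one]
  have hmul : (q * l) ^ (1/q) = B * l ^ (1/q) := by
    rw [Real.mul_rpow hq0.le hl]
  have hb : (c / (A * B)) ^ q' = c ^ q' / (q' * q ^ (q' / q)) := by
    rw [Real.div_rpow hc.le (by positivity), Real.mul_rpow hApos.le hBpos.le, hAq', hBq']
  rw [hqlq, hmul, hb] at hyoung
  have hlhs : B * l ^ (1/q) * (c / (A * B)) = c / A * l ^ (1/q) := by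
    field_simp
  rw [hlhs] at hyoung
  have hkey : L0 * q' * q ^ (q' / q) ≤ c ^ q' := by
    have h1 : q * l / q = l := by field_simp
    rw [h1] at hyoung
    have h2 : L0 / q' ≤ c ^ q' / (q' * q ^ (q' / q)) / q' := by linarith
    rw [div_le_div_iff₀ hq'0 (by positivity)] at h2
    have h3 : L0 ≤ c ^ q' / (q' * q ^ (q' / q)) := le_of_mul_le_mul_right h2 hq'0
    have h4 := (le_div_iff₀ (by positivity : (0:ℝ) < q' * q ^ (q' / q))).1 h3
    linarith [h4]
  have hfin := Real.rpow_le_rpow (by positivity) hkey (le_of_lt (by positivity : (0:ℝ) < 1/q'))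
  have hcq : (c ^ q') ^ (1/q') = c := by
    rw [← Real.rpow_mul hc.le, mul_one_div_cancel hq'0.ne', Real.rpow_one]
  have hexp : (L0 * q' * q ^ (q' / q)) ^ (1/q') = L0 ^ (1/q') * A * B := by
    rw [Real.mul_rpow (by positivity) hQpos.le, Real.mul_rpow hL0.le hq'0.le,
      ← Real.rpow_mul hq0.le, hA, hB]
    congr 2
    field_simp
  rw [hcq, hexp] at hfin
  exact hfin
end

section
/- Let 2 ≤ q < p and L₊ > 0 with L₊ ≤ p + q - 2. Set c̄ = (L₊^((q-1)/q) · q/(q-1)) · (p+q-2)^(1/q) and β̄ = (L₊/(p+q-2))^(1/q). Then β̄ ≤ 1 and ((p-1)/(q-1))β̄^p + β̄^q - c̄·β̄ + L₊ ≤ 0. -/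
theorem stmt_5 (p q L : ℝ) (hq : 2 ≤ q) (hqp : q < p)
    (hL : 0 < L) (hLle : L ≤ p + q - 2) :
    ((L / (p + q - 2)) ^ (1 / q) : ℝ) ≤ 1 ∧
    ((p - 1) / (q - 1)) * ((L / (p + q - 2)) ^ (1 / q)) ^ p
      + ((L / (p + q - 2)) ^ (1 / q)) ^ q
      - ((L ^ ((q - 1) / q) * q / (q - 1)) * (p + q - 2) ^ (1 / q))
        * (L / (p + q - 2)) ^ (1 / q) + L ≤ 0 := by
  have hq0 : (0:ℝ) < q := by linarith
  have hq1 : (0:ℝ) < q - 1 := by linarith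
  have hA : (0:ℝ) < p + q - 2 := by linarith
  have hx : 0 < L / (p + q - 2) := div_pos hL hA
  have hx1 : L / (p + q - 2) ≤ 1 := (div_le_one hA).mpr hLle
  have h1 : (L / (p + q - 2)) ^ (1/q) ≤ 1 :=
    Real.rpow_le_one hx.le hx1 (by positivity)
  refine ⟨h1, ?_⟩
  have hbp : ((L / (p + q - 2)) ^ (1/q)) ^ p = (L / (p + q - 2)) ^ (p/q) := by
    rw [← Real.rpow_mul hx.le]
    congr 1
    field_simp
  have hbq : ((L / (p + q - 2)) ^ (1/q)) ^ q = L / (p + q - 2) := by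
    rw [← Real.rpow_mul hx.le, one_div, inv_mul_cancel₀ hq0.ne', Real.rpow_one]
  have hcb : (L ^ ((q - 1)/q) * q / (q - 1)) * (p + q - 2) ^ (1/q)
      * (L / (p + q - 2)) ^ (1/q) = L * q / (q - 1) := by
    rw [Real.div_rpow hL.le hA.le]
    have hApos : (0:ℝ) < (p + q - 2) ^ (1/q) := Real.rpow_pos_of_pos hA _
    have hLL : L ^ ((q - 1)/q) * L ^ (1/q) = L := by
      rw [← Real.rpow_add hL]
      have : (q - 1)/q + 1/q = 1 := by field_simp; ring
      rw [this, Real.rpow_one]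
    have h3 : (p + q - 2) ^ (1/q) * (L ^ (1/q) / (p + q - 2) ^ (1/q)) = L ^ (1/q) := by
      field_simp
    rw [mul_assoc, h3]
    calc L ^ ((q - 1)/q) * q / (q - 1) * L ^ (1/q)
        = (L ^ ((q - 1)/q) * L ^ (1/q)) * q / (q - 1) := by ring
      _ = L * q / (q - 1) := by rw [hLL]
  rw [hbp, hbq, hcb]
  have key : (L / (p + q - 2)) ^ (p/q) ≤ L / (p + q - 2) := by
    calc (L / (p + q - 2)) ^ (p/q) ≤ (L / (p + q - 2)) ^ (1:ℝ) :=
          Real.rpow_le_rpow_of_exponent_ge hx hx1 ((one_le_div hq0).mpr hqp.le)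
      _ = L / (p + q - 2) := Real.rpow_one _
  have h2 : (p - 1)/(q - 1) * ((L / (p + q - 2)) ^ (p/q))
      ≤ (p - 1)/(q - 1) * (L / (p + q - 2)) :=
    mul_le_mul_of_nonneg_left key (div_nonneg (by linarith) hq1.le)
  have heq : (p - 1)/(q - 1) * (L / (p + q - 2)) + L / (p + q - 2)
      - L * q / (q - 1) + L = 0 := by
    field_simp
    ring
  linarith [h2, heq]
end

section
/- Let 2 ≤ q < p and L₊ ≥ ((p-1)/(q-1))(p+q-2). Set c̄ = (L₊^((p-1)/p) · p / ((q-1)^(1/p)(p-1)^((p-1)/p))) · (p+q-2)^(1/p) and β̄ = (c̄(q-1)/(p(p+q-2)))^(1/(p-1)). Then β̄ ≥ 1 and ((p-1)/(q-1))β̄^p + β̄^q - c̄·β̄ + L₊ ≤ 0. -/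
theorem stmt_7 (p q L : ℝ) (hq : 2 ≤ q) (hqp : q < p)
    (hL : ((p - 1) / (q - 1)) * (p + q - 2) ≤ L)
    (c β : ℝ)
    (hc : c = (L ^ ((p - 1) / p) * p / ((q - 1) ^ (1 / p) * (p - 1) ^ ((p - 1) / p)))
        * (p + q - 2) ^ (1 / p))
    (hβ : β = (c * (q - 1) / (p * (p + q - 2))) ^ (1 / (p - 1))) :
    1 ≤ β ∧
    ((p - 1) / (q - 1)) * β ^ p + β ^ q - c * β + L ≤ 0 := by
  have hp2 : (2:ℝ) < p := lt_of_le_of_lt hq hqp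
  have hp0 : (0:ℝ) < p := by linarith
  have hp0' : p ≠ 0 := ne_of_gt hp0
  have hq1 : (0:ℝ) < q - 1 := by linarith
  have hp1 : (0:ℝ) < p - 1 := by linarith
  have hp1' : p - 1 ≠ 0 := ne_of_gt hp1
  have hD : (0:ℝ) < p + q - 2 := by linarith
  have key : (p-1)*(p+q-2) ≤ L*(q-1) := by
    have h := hL
    rw [div_mul_eq_mul_div, div_le_iff₀ hq1] at h
    linarith
  have hL0 : 0 < L := by nlinarith
  set x : ℝ := L*(q-1)/((p-1)*(p+q-2)) with hxdef
  have hx0 : 0 < x := by positivity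
  have hx1 : 1 ≤ x := (le_div_iff₀ (by positivity)).mpr (by linarith)
  -- generic split lemma
  have split : ∀ a : ℝ, 0 < a → a ^ ((p-1)/p) * a ^ (1/p) = a := by
    intro a ha
    rw [← Real.rpow_add ha, show (p-1)/p + 1/p = 1 by field_simp; ring, Real.rpow_one]
  have hxs : x ^ ((p-1)/p) =
      L ^ ((p-1)/p) * (q-1) ^ ((p-1)/p) / ((p-1) ^ ((p-1)/p) * (p+q-2) ^ ((p-1)/p)) := by
    rw [hxdef, Real.div_rpow (by positivity) (by positivity),
      Real.mul_rpow hL0.le hq1.le, Real.mul_rpow hp1.le hD.le]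
  have hQ := split (q-1) hq1
  have hDs := split (p+q-2) hD
  have hPs := split (p-1) hp1
  have hLs := split L hL0
  have hQp : (0:ℝ) < (q-1) ^ (1/p) := Real.rpow_pos_of_pos hq1 _
  have hDp : (0:ℝ) < (p+q-2) ^ ((p-1)/p) := Real.rpow_pos_of_pos hD _
  have hPp : (0:ℝ) < (p-1) ^ ((p-1)/p) := Real.rpow_pos_of_pos hp1 _
  have hkey : c * (q-1) / (p*(p+q-2)) = x ^ ((p-1)/p) := by
    rw [hc, hxs]
    field_simp
    linear_combination (q-1)*hDs
      - (p+q-2)*hQ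
  have hβx : β = x ^ (1/p) := by
    rw [hβ, hkey, ← Real.rpow_mul hx0.le,
      show (p-1)/p * (1/(p-1)) = 1/p by field_simp]
  have hβp : β ^ p = x := by
    rw [hβx, ← Real.rpow_mul hx0.le, one_div, inv_mul_cancel₀ hp0', Real.rpow_one]
  have hβ1 : 1 ≤ β := by
    rw [hβx]
    exact Real.one_le_rpow hx1 (by positivity)
  have hβq : β ^ q ≤ x := by
    rw [hβx, ← Real.rpow_mul hx0.le]
    calc x ^ (1/p*q) ≤ x ^ (1:ℝ) :=
          Real.rpow_le_rpow_of_exponent_le hx1 (by rw [div_mul_eq_mul_div, div_le_one hp0]; linarith)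
      _ = x := Real.rpow_one x
  have hkey' : c * (q-1) = x ^ ((p-1)/p) * (p*(p+q-2)) := by
    field_simp at hkey
    linarith
  have hxx := split x hx0
  have hcb : c * β = x * (p*(p+q-2))/(q-1) := by
    rw [hβx, eq_div_iff (ne_of_gt hq1)]
    linear_combination (x^(1/p))*hkey' + (p*(p+q-2))*hxx
  refine ⟨hβ1, ?_⟩
  have heq : (p-1)/(q-1) * x + x - x * (p*(p+q-2))/(q-1) + L = 0 := by
    rw [hxdef]
    field_simp
    ring
  have : (p-1)/(q-1) * β ^ p + β ^ q - c * β + L ≤ (p-1)/(q-1) * x + x - x * (p*(p+q-2))/(q-1) + L := by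
    rw [hβp, hcb]
    linarith
  linarith
end

section
/- Let 2 ≤ q < p, s₀ = ((q-1)/(p-1))^(1/(p-q)), and q' = q/(q-1). If c ≤ q·((q-1)/(p-1))^((q-1)/(p-q)) and c ≥ L₊^(1/q')·q'^(1/q')·q^(1/q) for some L₊ > 0, then β̄ := (c/q)^(1/(q-1)) satisfies β̄ ≤ s₀ and β̄^q - c·β̄ + L₊ ≤ 0. -/
theorem stmt_19 (p q q' s₀ L c : ℝ) (hq : 2 ≤ q) (hqp : q < p)
    (hq' : q' = q / (q - 1))
    (hs₀ : s₀ = ((q - 1) / (p - 1)) ^ (1 / (p - q)))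
    (hL : 0 < L)
    (hc1 : c ≤ q * ((q - 1) / (p - 1)) ^ ((q - 1) / (p - q)))
    (hc2 : L ^ (1 / q') * q' ^ (1 / q') * q ^ (1 / q) ≤ c) :
    (c / q) ^ (1 / (q - 1)) ≤ s₀ ∧
    ((c / q) ^ (1 / (q - 1))) ^ q - c * (c / q) ^ (1 / (q - 1)) + L ≤ 0 := by
  have hq0 : (0:ℝ) < q := by linarith
  have hqm : (0:ℝ) < q - 1 := by linarith
  have hpq : (0:ℝ) < p - q := by linarith
  have hp1 : (0:ℝ) < p - 1 := by linarith
  have hq'0 : 0 < q' := by rw [hq']; positivity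
  have hc0 : 0 < c := lt_of_lt_of_le (by positivity) hc2
  have hcq : 0 < c / q := by positivity
  have hb : ((c/q) ^ (1/(q-1))) ^ q = (c/q) ^ q' := by
    rw [← Real.rpow_mul hcq.le]
    congr 1
    rw [hq']
    field_simp
  have hcb : c * (c/q) ^ (1/(q-1)) = q * (c/q) ^ q' := by
    have h1 : (c/q) ^ q' = (c/q) * (c/q) ^ (1/(q-1)) := by
      have : q' = 1 + 1/(q-1) := by rw [hq']; field_simp; ring
      rw [this, Real.rpow_add hcq, Real.rpow_one]
    rw [h1]
    field_simp
  have hA : (L ^ (1/q') * q' ^ (1/q') * q ^ (1/q) / q) ^ q' = L / (q - 1) := by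
    rw [Real.div_rpow (by positivity) hq0.le,
        Real.mul_rpow (by positivity) (by positivity),
        Real.mul_rpow (by positivity) (by positivity),
        ← Real.rpow_mul hL.le, ← Real.rpow_mul hq'0.le, ← Real.rpow_mul hq0.le]
    have e1 : (1/q') * q' = 1 := by field_simp
    have e3 : q ^ ((1/q)*q') / q ^ q' = 1/q := by
      rw [← Real.rpow_sub hq0]
      have e2 : (1/q)*q' - q' = -1 := by rw [hq']; field_simp; ring
      rw [e2, Real.rpow_neg_one, one_div]
    rw [e1, Real.rpow_one, Real.rpow_one, mul_div_assoc, e3, hq']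
    field_simp
  have hmain : L ≤ (q - 1) * (c/q) ^ q' := by
    have h2 : (L ^ (1/q') * q' ^ (1/q') * q ^ (1/q) / q) ^ q' ≤ (c/q) ^ q' :=
      Real.rpow_le_rpow (by positivity) (by gcongr) hq'0.le
    rw [hA] at h2
    calc L = (q-1) * (L / (q-1)) := by field_simp
      _ ≤ (q-1) * (c/q) ^ q' := by nlinarith
  constructor
  · have h1 : c / q ≤ ((q-1)/(p-1)) ^ ((q-1)/(p-q)) := by
      rw [div_le_iff₀ hq0]; linarith
    calc (c/q) ^ (1/(q-1)) ≤ (((q-1)/(p-1)) ^ ((q-1)/(p-q))) ^ (1/(q-1)) :=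
        Real.rpow_le_rpow hcq.le h1 (by positivity)
      _ = ((q-1)/(p-1)) ^ (1/(p-q)) := by
        rw [← Real.rpow_mul (by positivity)]
        congr 1
        field_simp
      _ = s₀ := hs₀.symm
  · rw [hb, hcb]
    nlinarith [hmain]
end
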